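/- arXiv:math/0402139 — 3 statements merged into one kernel-verified Lean document; each statement's English description precedes it below -/
import Mathlib

section
/- Let μ be a Haar measure on G = GL(n,ℝ) and let f : G → ℂ be smooth (as a function on the open set of invertible matrices in M_n(ℝ) ≅ ℝ^{n²}) such that for every multi-index β of partial derivatives with respect to the matrix entries and every N ≥ 0 there is C with |∂^β f(g)| ≤ C·(‖g‖+‖g⁻¹‖)^{−N} and ∫_G |∂^β f(g)|·(‖g‖+‖g⁻¹‖)^N dμ(g) < ∞. Let a_f(m,ξ) = ∫_G f(g)·exp(i((g⁻¹m)·ξ − m·ξ)) dμ(g) and, for m ≠ 0, K_f(m,m') = (2π)^{−n} ∫_{ℝⁿ} e^{i(m−m')·ξ} a_f(m,ξ) dξ. Then for every r > 0: a_f(rm,ξ) = a_f(m,rξ) for all m, ξ ∈ ℝⁿ, and K_f(rm, rm') = r^{−n} K_f(m,m') for all m ≠ 0 and m' ∈ ℝⁿ. In particular the restriction k_f(m) = K_f(m,m) to the diagonal satisfies k_f(rm) = r^{−n} k_f(m), i.e. k_f is homogeneous of degree −n on ℝⁿ∖{0}. -/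
open MeasureTheory Matrix
open scoped Real

attribute [local instance] Matrix.normedAddCommGroup Matrix.normedSpace

/-- The operator norm of a real `n × n` matrix, acting on Euclidean space. -/
noncomputable def matOpNorm {n : ℕ} (A : Matrix (Fin n) (Fin n) ℝ) : ℝ :=
  ‖Matrix.toEuclideanCLM (𝕜 := ℝ) A‖

/-- The symbol `a_f(m, ξ) = ∫_G f(g) exp(i((g⁻¹m)·ξ − m·ξ)) dμ(g)`. -/
noncomputable def symb {n : ℕ} [MeasurableSpace (GL (Fin n) ℝ)]
    (μ : Measure (GL (Fin n) ℝ)) (f : Matrix (Fin n) (Fin n) ℝ → ℂ)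
    (m ξ : EuclideanSpace ℝ (Fin n)) : ℂ :=
  ∫ g : GL (Fin n) ℝ, f ↑g *
    Complex.exp (Complex.I *
      ((inner ℝ (Matrix.toEuclideanLin (↑g⁻¹ : Matrix (Fin n) (Fin n) ℝ) m) ξ : ℝ)
        - (inner ℝ m ξ : ℝ))) ∂μ

/-- The kernel `K_f(m, m') = (2π)⁻ⁿ ∫ e^{i(m−m')·ξ} a_f(m,ξ) dξ`. -/
noncomputable def ker {n : ℕ} [MeasurableSpace (GL (Fin n) ℝ)]
    (μ : Measure (GL (Fin n) ℝ)) (f : Matrix (Fin n) (Fin n) ℝ → ℂ)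
    (m m' : EuclideanSpace ℝ (Fin n)) : ℂ :=
  ((2 * π) ^ n)⁻¹ • ∫ ξ : EuclideanSpace ℝ (Fin n),
    Complex.exp (Complex.I * (inner ℝ (m - m') ξ : ℝ)) * symb μ f m ξ

set_option maxHeartbeats 2000000 in
/-- Homogeneity of the symbol and of the Schwartz kernel of `π(f)`:
`a_f(rm, ξ) = a_f(m, rξ)`, `K_f(rm, rm') = r⁻ⁿ K_f(m, m')`, and in particular the diagonal
restriction `k_f(m) = K_f(m,m)` is homogeneous of degree `−n` on `ℝⁿ ∖ {0}`. -/
theorem symbol_and_kernel_homogeneous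
    {n : ℕ} [MeasurableSpace (GL (Fin n) ℝ)] [BorelSpace (GL (Fin n) ℝ)]
    (μ : Measure (GL (Fin n) ℝ)) [μ.IsHaarMeasure]
    (f : Matrix (Fin n) (Fin n) ℝ → ℂ)
    (hf_smooth : ContDiffOn ℝ (⊤ : ℕ∞) f {A : Matrix (Fin n) (Fin n) ℝ | IsUnit A})
    (hf_decay : ∀ k N : ℕ, ∃ C : ℝ, ∀ g : GL (Fin n) ℝ,
      ‖iteratedFDerivWithin ℝ k f {A : Matrix (Fin n) (Fin n) ℝ | IsUnit A} ↑g‖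
        ≤ C / (matOpNorm (↑g : Matrix (Fin n) (Fin n) ℝ)
              + matOpNorm (↑g⁻¹ : Matrix (Fin n) (Fin n) ℝ)) ^ N)
    (hf_int : ∀ k N : ℕ, Integrable (fun g : GL (Fin n) ℝ =>
      ‖iteratedFDerivWithin ℝ k f {A : Matrix (Fin n) (Fin n) ℝ | IsUnit A} ↑g‖
        * (matOpNorm (↑g : Matrix (Fin n) (Fin n) ℝ)
            + matOpNorm (↑g⁻¹ : Matrix (Fin n) (Fin n) ℝ)) ^ N) μ)
    (r : ℝ) (hr : 0 < r) :
    (∀ m ξ : EuclideanSpace ℝ (Fin n), symb μ f (r • m) ξ = symb μ f m (r • ξ)) ∧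
    (∀ m : EuclideanSpace ℝ (Fin n), m ≠ 0 → ∀ m' : EuclideanSpace ℝ (Fin n),
      ker μ f (r • m) (r • m') = ((r ^ n)⁻¹ : ℝ) • ker μ f m m') ∧
    (∀ m : EuclideanSpace ℝ (Fin n), m ≠ 0 →
      ker μ f (r • m) (r • m) = ((r ^ n)⁻¹ : ℝ) • ker μ f m m) := by
  have hsymb : ∀ m ξ : EuclideanSpace ℝ (Fin n),
      symb μ f (r • m) ξ = symb μ f m (r • ξ) := by
    intro m ξ
    unfold symb
    refine integral_congr_ae (Filter.Eventually.of_forall fun g => ?_)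
    simp only
    have h := (Matrix.toEuclideanLin (↑g⁻¹ : Matrix (Fin n) (Fin n) ℝ)).map_smul r m
    rw [h, real_inner_smul_left, real_inner_smul_left,
      real_inner_smul_right, real_inner_smul_right]
  have hker : ∀ m : EuclideanSpace ℝ (Fin n), m ≠ 0 → ∀ m' : EuclideanSpace ℝ (Fin n),
      ker μ f (r • m) (r • m') = ((r ^ n)⁻¹ : ℝ) • ker μ f m m' := by
    intro m _ m'
    have key : (fun ξ : EuclideanSpace ℝ (Fin n) =>
        Complex.exp (Complex.I * (inner ℝ (r • m - r • m') ξ : ℝ)) * symb μ f (r • m) ξ)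
        = fun ξ => (fun η : EuclideanSpace ℝ (Fin n) =>
            Complex.exp (Complex.I * (inner ℝ (m - m') η : ℝ)) * symb μ f m η) (r • ξ) := by
      funext ξ
      simp only [hsymb m ξ]
      congr 2
      rw [← smul_sub, real_inner_smul_left, real_inner_smul_right]
    unfold ker
    rw [key, MeasureTheory.Measure.integral_comp_smul volume (fun η : EuclideanSpace ℝ (Fin n) => Complex.exp (Complex.I * (inner ℝ (m - m') η : ℝ)) * symb μ f m η) r, finrank_euclideanSpace, Fintype.card_fin,
      smul_comm, abs_of_nonneg (by positivity)]
  exact ⟨hsymb, hker, fun m hm => hker m hm m⟩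
end

section
/- Let k : ℝⁿ∖{0} → ℂ be continuous and homogeneous of degree −n, i.e. k(rm) = r^{−n} k(m) for all r > 0 and m ≠ 0. Let ψ ∈ C_c^∞(ℝⁿ) with support contained in ℝⁿ∖{0} satisfy ∫_0^∞ ψ(tm) t^{−1} dt = 1 for every m ≠ 0. Then for every φ ∈ C_c^∞(ℝⁿ) whose support does not contain 0, all the integrals below converge absolutely and ∫_{ℝⁿ} k(m) ψ(m) ( ∫_0^∞ φ(tm) t^{−1} dt ) dm = ∫_{ℝⁿ} k(m) φ(m) dm. -/
open MeasureTheory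

open MeasureTheory Set Function

namespace HomogExtAux

variable {n : ℕ}

lemma exists_annulus (A : EuclideanSpace ℝ (Fin n) → ℂ) (hAc : HasCompactSupport A)
    (hA0 : (0 : EuclideanSpace ℝ (Fin n)) ∉ tsupport A) :
    ∃ a b : ℝ, 0 < a ∧ 0 < b ∧ ∀ x ∈ tsupport A, a ≤ ‖x‖ ∧ ‖x‖ ≤ b := by
  obtain ⟨a, ha, hball⟩ := Metric.isOpen_iff.1 (isClosed_tsupport A).isOpen_compl 0 hA0
  obtain ⟨b, hb⟩ := hAc.isBounded.subset_closedBall 0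
  refine ⟨a, max b 1, ha, lt_of_lt_of_le one_pos (le_max_right _ _), fun x hx => ⟨?_, ?_⟩⟩
  · by_contra h
    push_neg at h
    exact hball (by simpa [Metric.mem_ball, dist_zero_right] using h) hx
  · exact le_trans (by simpa [Metric.mem_closedBall, dist_zero_right] using hb hx)
      (le_max_left _ _)

lemma k_mul_continuous (k A : EuclideanSpace ℝ (Fin n) → ℂ)
    (hk : ContinuousOn k {m : EuclideanSpace ℝ (Fin n) | m ≠ 0})
    (hA : Continuous A) (hA0 : (0 : EuclideanSpace ℝ (Fin n)) ∉ tsupport A) :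
    Continuous fun m => k m * A m := by
  rw [continuous_iff_continuousAt]
  intro m
  by_cases hm : m = (0 : EuclideanSpace ℝ (Fin n))
  · subst hm
    have h1 : (fun m : EuclideanSpace ℝ (Fin n) => k m * A m) =ᶠ[nhds 0] fun _ => 0 := by
      filter_upwards [(isClosed_tsupport A).isOpen_compl.mem_nhds hA0] with x hx
      simp [image_eq_zero_of_notMem_tsupport hx]
    exact ContinuousAt.congr continuousAt_const h1.symm
  · have hopen : IsOpen {m : EuclideanSpace ℝ (Fin n) | m ≠ 0} := isOpen_compl_singleton
    exact (hk.continuousAt (hopen.mem_nhds hm)).mul hA.continuousAt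

lemma slice_integrable (B : EuclideanSpace ℝ (Fin n) → ℂ) (hB : Continuous B)
    (hBc : HasCompactSupport B) (hB0 : (0 : EuclideanSpace ℝ (Fin n)) ∉ tsupport B)
    (m : EuclideanSpace ℝ (Fin n)) :
    IntegrableOn (fun t : ℝ => B (t • m) / (t : ℂ)) (Ioi (0 : ℝ)) volume := by
  obtain ⟨c, d, hc, hd, hcd⟩ := exists_annulus B hBc hB0
  by_cases hm : m = (0 : EuclideanSpace ℝ (Fin n))
  · subst hm
    have hz : ∀ t : ℝ, B (t • (0 : EuclideanSpace ℝ (Fin n))) / (t : ℂ) = 0 := fun t => by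
      simp [image_eq_zero_of_notMem_tsupport hB0]
    have : (fun t : ℝ => B (t • (0 : EuclideanSpace ℝ (Fin n))) / (t : ℂ)) = fun _ => 0 :=
      funext hz
    rw [this]
    exact integrableOn_zero
  · have hm' : 0 < ‖m‖ := norm_pos_iff.2 hm
    have hIsub : Icc (c / ‖m‖) (d / ‖m‖) ⊆ Ioi 0 := fun t ht =>
      lt_of_lt_of_le (div_pos hc hm') ht.1
    have hcont : ContinuousOn (fun t : ℝ => B (t • m) / (t : ℂ)) (Icc (c / ‖m‖) (d / ‖m‖)) := by
      apply ContinuousOn.div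
      · exact (hB.comp (continuous_id.smul continuous_const)).continuousOn
      · exact Complex.continuous_ofReal.continuousOn
      · intro t ht
        exact_mod_cast ne_of_gt (hIsub ht)
    have h1 : IntegrableOn (fun t : ℝ => B (t • m) / (t : ℂ)) (Icc (c / ‖m‖) (d / ‖m‖)) volume :=
      hcont.integrableOn_compact isCompact_Icc
    have h2 : IntegrableOn (fun t : ℝ => B (t • m) / (t : ℂ))
        (Ioi 0 \ Icc (c / ‖m‖) (d / ‖m‖)) volume := by
      apply IntegrableOn.congr_fun integrableOn_zero _ (measurableSet_Ioi.diff measurableSet_Icc)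
      intro t ht
      have hB0' : B (t • m) = 0 := by
        apply image_eq_zero_of_notMem_tsupport
        intro hmem
        obtain ⟨h1', h2'⟩ := hcd _ hmem
        rw [norm_smul, Real.norm_eq_abs, abs_of_pos ht.1] at h1' h2'
        exact ht.2 ⟨(div_le_iff₀ hm').2 h1', (le_div_iff₀ hm').2 h2'⟩
      simp [hB0']
    have hsub : Ioi (0:ℝ) ⊆ Icc (c / ‖m‖) (d / ‖m‖) ∪ (Ioi 0 \ Icc (c / ‖m‖) (d / ‖m‖)) := by
      intro t ht
      by_cases h : t ∈ Icc (c / ‖m‖) (d / ‖m‖)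
      · exact Or.inl h
      · exact Or.inr ⟨ht, h⟩
    exact (h1.union h2).mono_set hsub

lemma prod_int (A B : EuclideanSpace ℝ (Fin n) → ℂ)
    (hA : Continuous A) (hAc : HasCompactSupport A)
    (hA0 : (0 : EuclideanSpace ℝ (Fin n)) ∉ tsupport A)
    (hB : Continuous B) (hBc : HasCompactSupport B)
    (hB0 : (0 : EuclideanSpace ℝ (Fin n)) ∉ tsupport B) :
    Integrable (fun p : ℝ × EuclideanSpace ℝ (Fin n) => A p.2 * (B (p.1 • p.2) / (p.1 : ℂ)))
      (((volume : Measure ℝ).restrict (Ioi 0)).prod volume) := by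
  obtain ⟨a, b, ha, hb, hab⟩ := exists_annulus A hAc hA0
  obtain ⟨c, d, hc, hd, hcd⟩ := exists_annulus B hBc hB0
  obtain ⟨CA, hCA⟩ := hAc.exists_bound_of_continuous hA
  obtain ⟨CB, hCB⟩ := hBc.exists_bound_of_continuous hB
  have hCA0 : 0 ≤ CA := le_trans (norm_nonneg _) (hCA 0)
  have hCB0 : 0 ≤ CB := le_trans (norm_nonneg _) (hCB 0)
  set μ := ((volume : Measure ℝ).restrict (Ioi 0)).prod (volume : Measure (EuclideanSpace ℝ (Fin n))) with hμ
  set C : ℝ := CA * (CB * (b / c)) with hC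
  have hC0 : 0 ≤ C := by positivity
  set S : Set (ℝ × EuclideanSpace ℝ (Fin n)) := Icc (c / b) (d / a) ×ˢ Metric.closedBall 0 b with hS
  have hSmeas : MeasurableSet S := measurableSet_Icc.prod measurableSet_closedBall
  have hmeas : AEStronglyMeasurable
      (fun p : ℝ × EuclideanSpace ℝ (Fin n) => A p.2 * (B (p.1 • p.2) / (p.1 : ℂ))) μ := by
    apply Measurable.aestronglyMeasurable
    apply Measurable.mul
    · exact (hA.comp continuous_snd).measurable
    · apply Measurable.div
      · exact (hB.comp (continuous_fst.smul continuous_snd)).measurable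
      · exact Complex.measurable_ofReal.comp measurable_fst
  have hnull : μ ((Ioi (0:ℝ))ᶜ ×ˢ (univ : Set (EuclideanSpace ℝ (Fin n)))) = 0 := by
    rw [Measure.prod_prod, Measure.restrict_apply measurableSet_Ioi.compl]
    rw [compl_Ioi, Set.Iic_inter_Ioi, Set.Ioc_self, measure_empty, zero_mul]
  have hae : ∀ᵐ p : ℝ × EuclideanSpace ℝ (Fin n) ∂μ, 0 < p.1 := by
    rw [ae_iff]
    refine measure_mono_null ?_ hnull
    intro p hp
    exact ⟨by simpa using hp, mem_univ _⟩
  refine Integrable.mono' (g := S.indicator fun _ => C) ?_ hmeas ?_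
  · rw [integrable_indicator_iff hSmeas]
    refine integrableOn_const ?_ enorm_ne_top
    rw [Measure.prod_prod]
    exact (ENNReal.mul_lt_top
      (lt_of_le_of_lt (Measure.restrict_apply_le _ _) measure_Icc_lt_top)
      (isCompact_closedBall _ _).measure_lt_top).ne
  · filter_upwards [hae] with p hp
    by_cases hZ : A p.2 * (B (p.1 • p.2) / (p.1 : ℂ)) = 0
    · rw [hZ, norm_zero]
      exact Set.indicator_nonneg (fun _ _ => hC0) p
    · have hA2 : A p.2 ≠ 0 := fun h => hZ (by simp [h])
      have hB2 : B (p.1 • p.2) ≠ 0 := fun h => hZ (by simp [h])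
      obtain ⟨ha2, hb2⟩ := hab p.2 (subset_tsupport A hA2)
      obtain ⟨hc2, hd2⟩ := hcd _ (subset_tsupport B hB2)
      rw [norm_smul, Real.norm_eq_abs, abs_of_pos hp] at hc2 hd2
      have hp1 : c / b ≤ p.1 := by
        rw [div_le_iff₀ hb]
        calc c ≤ p.1 * ‖p.2‖ := hc2
        _ ≤ p.1 * b := by
          apply mul_le_mul_of_nonneg_left hb2 hp.le
      have hp2 : p.1 ≤ d / a := by
        rw [le_div_iff₀ ha]
        calc p.1 * a ≤ p.1 * ‖p.2‖ := mul_le_mul_of_nonneg_left ha2 hp.le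
        _ ≤ d := hd2
      have hmemS : p ∈ S := by
        refine ⟨⟨hp1, hp2⟩, ?_⟩
        rw [Metric.mem_closedBall, dist_zero_right]
        exact hb2
      rw [Set.indicator_of_mem hmemS]
      have hnorm : ‖A p.2 * (B (p.1 • p.2) / (p.1 : ℂ))‖
          = ‖A p.2‖ * (‖B (p.1 • p.2)‖ * (p.1)⁻¹) := by
        rw [norm_mul, norm_div, Complex.norm_real, Real.norm_eq_abs, abs_of_pos hp,
          div_eq_mul_inv]
      rw [hnorm]
      have hinv : (p.1)⁻¹ ≤ b / c := by
        rw [← inv_div c b]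
        exact inv_anti₀ (div_pos hc hb) hp1
      refine mul_le_mul (hCA _) ?_ (by positivity) hCA0
      exact mul_le_mul (hCB _) hinv (by positivity) hCB0


lemma change_var (k ψC φ : EuclideanSpace ℝ (Fin n) → ℂ)
    (hk_hom : ∀ r : ℝ, 0 < r → ∀ m : EuclideanSpace ℝ (Fin n), m ≠ 0 →
      k (r • m) = ((r ^ n)⁻¹ : ℝ) • k m)
    (hφ0 : φ 0 = 0) {t : ℝ} (ht : 0 < t) :
    ∫ m, (k m * ψC m) * φ (t • m) = ∫ u, (k u * φ u) * ψC (t⁻¹ • u) := by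
  have hpoint : ∀ u : EuclideanSpace ℝ (Fin n),
      (k (t⁻¹ • u) * ψC (t⁻¹ • u)) * φ u
        = (t ^ n : ℝ) • ((k u * φ u) * ψC (t⁻¹ • u)) := by
    intro u
    by_cases hu : u = 0
    · subst hu; simp [hφ0]
    · rw [hk_hom t⁻¹ (inv_pos.2 ht) u hu, inv_pow, inv_inv]
      rw [smul_mul_assoc, smul_mul_assoc]
      congr 1
      ring
  have h1 := Measure.integral_comp_smul_of_nonneg
      (volume : Measure (EuclideanSpace ℝ (Fin n)))
      (fun u => (k (t⁻¹ • u) * ψC (t⁻¹ • u)) * φ u) t (hR := ht.le)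
  simp only [smul_smul, inv_mul_cancel₀ ht.ne', one_smul] at h1
  rw [h1]
  simp_rw [hpoint]
  rw [integral_smul, finrank_euclideanSpace_fin, smul_smul,
    inv_mul_cancel₀ (pow_ne_zero n ht.ne'), one_smul]

end HomogExtAux

open HomogExtAux

/-- For `k` continuous and homogeneous of degree `−n` on `ℝⁿ ∖ {0}`, and `ψ` a
smooth compactly supported cutoff with support away from `0` satisfying `∫_0^∞ ψ(tm) dt/t = 1`
for `m ≠ 0`, the regularized extension of `k` agrees with integration against `k` on test
functions supported away from the origin. -/
theorem homogeneous_extension_agrees_off_origin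
    {n : ℕ}
    (k : EuclideanSpace ℝ (Fin n) → ℂ)
    (hk_cont : ContinuousOn k {m : EuclideanSpace ℝ (Fin n) | m ≠ 0})
    (hk_hom : ∀ r : ℝ, 0 < r → ∀ m : EuclideanSpace ℝ (Fin n), m ≠ 0 →
      k (r • m) = ((r ^ n)⁻¹ : ℝ) • k m)
    (ψ : EuclideanSpace ℝ (Fin n) → ℝ)
    (hψ_smooth : ContDiff ℝ (⊤ : ℕ∞) ψ) (hψ_supp : HasCompactSupport ψ)
    (hψ_zero : (0 : EuclideanSpace ℝ (Fin n)) ∉ tsupport ψ)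
    (hψ_one : ∀ m : EuclideanSpace ℝ (Fin n), m ≠ 0 →
      ∫ t in Set.Ioi (0 : ℝ), ψ (t • m) / t = 1)
    (φ : EuclideanSpace ℝ (Fin n) → ℂ)
    (hφ_smooth : ContDiff ℝ (⊤ : ℕ∞) φ) (hφ_supp : HasCompactSupport φ)
    (hφ_zero : (0 : EuclideanSpace ℝ (Fin n)) ∉ tsupport φ) :
    (∀ m : EuclideanSpace ℝ (Fin n),
      IntegrableOn (fun t : ℝ => φ (t • m) / (t : ℂ)) (Set.Ioi (0 : ℝ)) volume) ∧
    Integrable (fun m : EuclideanSpace ℝ (Fin n) =>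
      k m * (ψ m : ℂ) * ∫ t in Set.Ioi (0 : ℝ), φ (t • m) / (t : ℂ)) volume ∧
    Integrable (fun m : EuclideanSpace ℝ (Fin n) => k m * φ m) volume ∧
    ∫ m : EuclideanSpace ℝ (Fin n),
        k m * (ψ m : ℂ) * ∫ t in Set.Ioi (0 : ℝ), φ (t • m) / (t : ℂ)
      = ∫ m : EuclideanSpace ℝ (Fin n), k m * φ m := by
  have hφc : Continuous φ := hφ_smooth.continuous
  have hφ00 : φ 0 = 0 := image_eq_zero_of_notMem_tsupport hφ_zero
  -- complexified ψ
  set ψC : EuclideanSpace ℝ (Fin n) → ℂ := fun m => (ψ m : ℂ) with hψCdef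
  have hψCc : Continuous ψC := Complex.continuous_ofReal.comp hψ_smooth.continuous
  have hψsup : Function.support ψC = Function.support ψ := by
    ext x
    simp [hψCdef, Function.mem_support]
  have hψC0 : (0 : EuclideanSpace ℝ (Fin n)) ∉ tsupport ψC := by
    rw [tsupport, hψsup]
    exact hψ_zero
  have hψCcs : HasCompactSupport ψC := hψ_supp.mono (le_of_eq hψsup)
  -- g = k * ψC
  have hgc : Continuous (fun m => k m * ψC m) := k_mul_continuous k ψC hk_cont hψCc hψC0
  have hgsup : Function.support (fun m => k m * ψC m) ⊆ Function.support ψC := by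
    intro x hx
    intro h
    apply hx
    simp [h]
  have hgcs : HasCompactSupport (fun m => k m * ψC m) := hψCcs.mono hgsup
  have hg0 : (0 : EuclideanSpace ℝ (Fin n)) ∉ tsupport (fun m => k m * ψC m) :=
    fun h => hψC0 (closure_mono hgsup h)
  -- A2 = k * φ
  have hA2c : Continuous (fun u => k u * φ u) := k_mul_continuous k φ hk_cont hφc hφ_zero
  have hA2sup : Function.support (fun u => k u * φ u) ⊆ Function.support φ := by
    intro x hx
    intro h
    apply hx
    simp [h]
  have hA2cs : HasCompactSupport (fun u => k u * φ u) := hφ_supp.mono hA2sup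
  have hA20 : (0 : EuclideanSpace ℝ (Fin n)) ∉ tsupport (fun u => k u * φ u) :=
    fun h => hφ_zero (closure_mono hA2sup h)
  -- claims
  have claim1 : ∀ m : EuclideanSpace ℝ (Fin n),
      IntegrableOn (fun t : ℝ => φ (t • m) / (t : ℂ)) (Set.Ioi (0 : ℝ)) volume :=
    fun m => slice_integrable φ hφc hφ_supp hφ_zero m
  have hF1 : Integrable (fun p : ℝ × EuclideanSpace ℝ (Fin n) =>
      (k p.2 * ψC p.2) * (φ (p.1 • p.2) / (p.1 : ℂ)))
      (((volume : Measure ℝ).restrict (Set.Ioi 0)).prod volume) :=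
    prod_int (fun m => k m * ψC m) φ hgc hgcs hg0 hφc hφ_supp hφ_zero
  have hF2 : Integrable (fun p : ℝ × EuclideanSpace ℝ (Fin n) =>
      (k p.2 * φ p.2) * (ψC (p.1 • p.2) / (p.1 : ℂ)))
      (((volume : Measure ℝ).restrict (Set.Ioi 0)).prod volume) :=
    prod_int (fun u => k u * φ u) ψC hA2c hA2cs hA20 hψCc hψCcs hψC0
  have claim3 : Integrable (fun m : EuclideanSpace ℝ (Fin n) => k m * φ m) volume :=
    hA2c.integrable_of_hasCompactSupport hA2cs
  have claim2 : Integrable (fun m : EuclideanSpace ℝ (Fin n) =>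
      k m * (ψ m : ℂ) * ∫ t in Set.Ioi (0 : ℝ), φ (t • m) / (t : ℂ)) volume := by
    have h := hF1.integral_prod_right
    refine h.congr (Filter.Eventually.of_forall fun m => ?_)
    exact integral_const_mul (k m * ψC m) _
  refine ⟨claim1, claim2, claim3, ?_⟩
  -- substitution t ↦ t⁻¹ in the outer 1D integral
  have hsub : (∫ t in Set.Ioi (0:ℝ), (t:ℂ)⁻¹ * ∫ u, (k u * φ u) * ψC (t⁻¹ • u))
      = ∫ s in Set.Ioi (0:ℝ), (s:ℂ)⁻¹ * ∫ u, (k u * φ u) * ψC (s • u) := by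
    have h := integral_comp_rpow_Ioi
      (fun s : ℝ => (s:ℂ)⁻¹ * ∫ u, (k u * φ u) * ψC (s • u)) (p := (-1:ℝ)) (by norm_num)
    rw [← h]
    apply setIntegral_congr_fun measurableSet_Ioi
    intro x hx
    have hx0 : (0:ℝ) < x := hx
    have h1 : x ^ (-1:ℝ) = x⁻¹ := Real.rpow_neg_one x
    have h2 : ((-1:ℝ) - 1) = -2 := by norm_num
    have h3 : x ^ (-2:ℝ) = (x ^ (2:ℕ))⁻¹ := by
      rw [show (-2:ℝ) = -((2:ℕ):ℝ) by norm_num, Real.rpow_neg hx0.le, Real.rpow_natCast]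
    have hxC : (x:ℂ) ≠ 0 := by exact_mod_cast hx0.ne'
    dsimp only
    rw [h1, h2, h3, Complex.real_smul]
    push_cast
    rw [inv_inv]
    field_simp
    simp
  calc
    ∫ m : EuclideanSpace ℝ (Fin n),
        k m * (ψ m : ℂ) * ∫ t in Set.Ioi (0 : ℝ), φ (t • m) / (t : ℂ)
      = ∫ m : EuclideanSpace ℝ (Fin n),
          ∫ t in Set.Ioi (0 : ℝ), (k m * ψC m) * (φ (t • m) / (t : ℂ)) := by
        refine integral_congr_ae (Filter.Eventually.of_forall fun m => ?_)
        exact (integral_const_mul (k m * ψC m) _).symm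
    _ = ∫ t in Set.Ioi (0 : ℝ), ∫ m : EuclideanSpace ℝ (Fin n),
          (k m * ψC m) * (φ (t • m) / (t : ℂ)) := by
        exact (integral_integral_swap
          (f := fun (t : ℝ) (m : EuclideanSpace ℝ (Fin n)) => (k m * ψC m) * (φ (t • m) / (t : ℂ))) hF1).symm
    _ = ∫ t in Set.Ioi (0 : ℝ), (t:ℂ)⁻¹ * ∫ u, (k u * φ u) * ψC (t⁻¹ • u) := by
        apply setIntegral_congr_fun measurableSet_Ioi
        intro t ht
        have ht0 : (0:ℝ) < t := ht
        have e2 : ∀ m : EuclideanSpace ℝ (Fin n),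
            (k m * ψC m) * (φ (t • m) / (t : ℂ)) = (t:ℂ)⁻¹ * ((k m * ψC m) * φ (t • m)) := by
          intro m
          rw [div_eq_mul_inv]
          ring
        simp only [e2]
        rw [integral_const_mul, change_var k ψC φ hk_hom hφ00 ht0]
    _ = ∫ s in Set.Ioi (0:ℝ), (s:ℂ)⁻¹ * ∫ u, (k u * φ u) * ψC (s • u) := hsub
    _ = ∫ s in Set.Ioi (0:ℝ), ∫ u, (k u * φ u) * (ψC (s • u) / (s:ℂ)) := by
        apply setIntegral_congr_fun measurableSet_Ioi
        intro s hs
        have e3 : ∀ u : EuclideanSpace ℝ (Fin n),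
            (k u * φ u) * (ψC (s • u) / (s:ℂ)) = (s:ℂ)⁻¹ * ((k u * φ u) * ψC (s • u)) := by
          intro u
          rw [div_eq_mul_inv]
          ring
        simp only [e3]
        rw [integral_const_mul]
    _ = ∫ u, ∫ s in Set.Ioi (0:ℝ), (k u * φ u) * (ψC (s • u) / (s:ℂ)) :=
        integral_integral_swap
          (f := fun (s : ℝ) (u : EuclideanSpace ℝ (Fin n)) => (k u * φ u) * (ψC (s • u) / (s:ℂ))) hF2
    _ = ∫ u, k u * φ u := by
        refine integral_congr_ae (Filter.Eventually.of_forall fun u => ?_)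
        dsimp only
        rw [integral_const_mul]
        by_cases hu : u = (0 : EuclideanSpace ℝ (Fin n))
        · subst hu
          simp [hφ00]
        · have hcast : (∫ s in Set.Ioi (0:ℝ), ψC (s • u) / (s:ℂ))
              = ((∫ s in Set.Ioi (0:ℝ), ψ (s • u) / s : ℝ) : ℂ) := by
            have e4 : (fun s : ℝ => ψC (s • u) / (s:ℂ)) = fun s : ℝ => ((ψ (s • u) / s : ℝ) : ℂ) := by
              funext s
              push_cast
              ring
            rw [e4]
            exact integral_ofReal
          rw [hcast, hψ_one u hu]
          simp
end

section
/- For t > 0 define f_t : ℝ → ℝ by f_t(y) = (2πt)^{−1/2}·exp(−(log y)²/(4t))·y^{−1} for y > 0 and f_t(y) = 0 for y ≤ 0. Then f_t is a Schwartz function on ℝ; in particular, f_t is infinitely differentiable on all of ℝ (all derivatives vanish at 0) and y^α f_t^{(β)}(y) is bounded on ℝ for all nonnegative integers α, β. -/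
open scoped Real
open Classical

open Polynomial Filter

/-- The polynomial appearing in the `n`-th derivative of the Langlands kernel density. -/
noncomputable def LKq (t : ℝ) : ℕ → Polynomial ℝ
  | 0 => Polynomial.C ((2 * π * t) ^ (-(1 : ℝ) / 2))
  | n + 1 => (LKq t n).derivative -
      (Polynomial.C (1 / (2 * t)) * Polynomial.X + Polynomial.C ((n : ℝ) + 1)) * LKq t n

/-- Closed form for the `n`-th derivative of the Langlands kernel density. -/
noncomputable def LKF (t : ℝ) (n : ℕ) (y : ℝ) : ℝ :=
  if 0 < y then (LKq t n).eval (Real.log y) *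
    Real.exp (-(Real.log y) ^ 2 / (4 * t) - ((n : ℝ) + 1) * Real.log y) else 0

lemma LK_poly_abs_le_exp (q : Polynomial ℝ) :
    ∃ C : ℝ, 0 ≤ C ∧ ∀ u : ℝ, |q.eval u| ≤ C * Real.exp |u| := by
  induction q using Polynomial.induction_on' with
  | add p q hp hq =>
    obtain ⟨C1, hC1, h1⟩ := hp
    obtain ⟨C2, hC2, h2⟩ := hq
    refine ⟨C1 + C2, by positivity, fun u => ?_⟩
    simp only [Polynomial.eval_add]
    calc |p.eval u + q.eval u| ≤ |p.eval u| + |q.eval u| := abs_add_le _ _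
      _ ≤ C1 * Real.exp |u| + C2 * Real.exp |u| := add_le_add (h1 u) (h2 u)
      _ = (C1 + C2) * Real.exp |u| := by ring
  | monomial k a =>
    refine ⟨|a| * (k.factorial : ℝ), by positivity, fun u => ?_⟩
    rw [Polynomial.eval_monomial, abs_mul, abs_pow]
    have h := Real.pow_div_factorial_le_exp _ (abs_nonneg u) k
    have hk : (0 : ℝ) < (k.factorial : ℝ) := by positivity
    have h' : |u| ^ k ≤ (k.factorial : ℝ) * Real.exp |u| := by
      rw [div_le_iff₀ hk] at h
      linarith [h]
    calc |a| * |u| ^ k ≤ |a| * ((k.factorial : ℝ) * Real.exp |u|) :=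
          mul_le_mul_of_nonneg_left h' (abs_nonneg a)
      _ = |a| * (k.factorial : ℝ) * Real.exp |u| := by ring

lemma LK_gauss_bound {t : ℝ} (ht : 0 < t) (q : Polynomial ℝ) (c : ℝ) :
    ∃ C : ℝ, 0 ≤ C ∧ ∀ u : ℝ,
      |q.eval u| * Real.exp (-u ^ 2 / (4 * t) + c * u) ≤ C * Real.exp (-u ^ 2 / (8 * t)) := by
  obtain ⟨C0, hC0, h0⟩ := LK_poly_abs_le_exp q
  refine ⟨C0 * Real.exp (2 * t * (1 + |c|) ^ 2), by positivity, fun u => ?_⟩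
  have h1 : c * u ≤ |c| * |u| := by
    calc c * u ≤ |c * u| := le_abs_self _
      _ = |c| * |u| := abs_mul c u
  have key : |u| + (-u ^ 2 / (4 * t) + c * u) ≤ 2 * t * (1 + |c|) ^ 2 + -u ^ 2 / (8 * t) := by
    set s := u ^ 2 / (8 * t) with hsdef
    have hs : u ^ 2 = 8 * t * s := by rw [hsdef]; field_simp
    have hs' : -u ^ 2 / (4 * t) = -(2 * s) := by rw [hsdef]; field_simp; ring
    have hs'' : -u ^ 2 / (8 * t) = -s := by rw [hsdef, neg_div]
    rw [hs', hs'']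
    have hsq : (0 : ℝ) ≤ (|u| - 4 * t * (1 + |c|)) ^ 2 := sq_nonneg _
    have habs : |u| ^ 2 = u ^ 2 := sq_abs u
    nlinarith [hsq, habs, hs, h1, ht, abs_nonneg u, abs_nonneg c,
      mul_le_mul_of_nonneg_left h1 (le_of_lt ht)]
  calc |q.eval u| * Real.exp (-u ^ 2 / (4 * t) + c * u)
      ≤ C0 * Real.exp |u| * Real.exp (-u ^ 2 / (4 * t) + c * u) := by
        apply mul_le_mul_of_nonneg_right (h0 u) (Real.exp_nonneg _)
    _ = C0 * Real.exp (|u| + (-u ^ 2 / (4 * t) + c * u)) := by rw [mul_assoc, ← Real.exp_add]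
    _ ≤ C0 * Real.exp (2 * t * (1 + |c|) ^ 2 + -u ^ 2 / (8 * t)) := by
        apply mul_le_mul_of_nonneg_left (Real.exp_le_exp.2 key) hC0
    _ = C0 * Real.exp (2 * t * (1 + |c|) ^ 2) * Real.exp (-u ^ 2 / (8 * t)) := by
        rw [Real.exp_add]; ring

lemma LKF_pos {t : ℝ} (n : ℕ) {y : ℝ} (hy : 0 < y) :
    LKF t n y = (LKq t n).eval (Real.log y) *
      Real.exp (-(Real.log y) ^ 2 / (4 * t) - ((n : ℝ) + 1) * Real.log y) := if_pos hy

lemma LKF_nonpos {t : ℝ} (n : ℕ) {y : ℝ} (hy : ¬ 0 < y) : LKF t n y = 0 := if_neg hy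

lemma LK_exp_tendsto {t : ℝ} (ht : 0 < t) :
    Tendsto (fun y : ℝ => Real.exp (-(Real.log y) ^ 2 / (8 * t))) (nhdsWithin 0 (Set.Ioi 0))
      (nhds 0) := by
  have hlog : Tendsto Real.log (nhdsWithin 0 (Set.Ioi 0)) atBot :=
    Real.tendsto_log_nhdsGT_zero
  have hsq : Tendsto (fun u : ℝ => u ^ 2) atBot atTop := by
    have habs : Tendsto (fun u : ℝ => |u| ^ 2) atBot atTop :=
      (tendsto_pow_atTop two_ne_zero).comp tendsto_abs_atBot_atTop
    simpa [sq_abs] using habs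
  have hdiv : Tendsto (fun s : ℝ => -s / (8 * t)) atTop atBot := by
    have : Tendsto (fun s : ℝ => s / (8 * t)) atTop atTop :=
      Tendsto.atTop_div_const (by positivity) tendsto_id
    have h2 := tendsto_neg_atTop_atBot.comp this
    simpa [Function.comp_def, neg_div] using h2
  exact Real.tendsto_exp_atBot.comp ((hdiv.comp hsq).comp hlog)

lemma LKF_hasDerivAt {t : ℝ} (ht : 0 < t) (n : ℕ) (y : ℝ) :
    HasDerivAt (LKF t n) (LKF t (n + 1) y) y := by
  rcases lt_trichotomy 0 y with hy | hy | hy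
  · -- positive case
    have hlog : HasDerivAt Real.log y⁻¹ y := Real.hasDerivAt_log hy.ne'
    have hq : HasDerivAt (fun z => (LKq t n).eval (Real.log z))
        ((LKq t n).derivative.eval (Real.log y) * y⁻¹) y :=
      (Polynomial.hasDerivAt (LKq t n) (Real.log y)).comp y hlog
    have hsq : HasDerivAt (fun z => (Real.log z) ^ 2) (2 * Real.log y * y⁻¹) y := by
      have := hlog.fun_pow 2
      simpa using this
    have hφ : HasDerivAt (fun z => -(Real.log z) ^ 2 / (4 * t) - ((n : ℝ) + 1) * Real.log z)
        (-(2 * Real.log y * y⁻¹) / (4 * t) - ((n : ℝ) + 1) * y⁻¹) y :=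
      (hsq.neg.div_const (4 * t)).sub (hlog.const_mul ((n : ℝ) + 1))
    have hg : HasDerivAt (fun z => (LKq t n).eval (Real.log z) *
          Real.exp (-(Real.log z) ^ 2 / (4 * t) - ((n : ℝ) + 1) * Real.log z))
        ((LKq t n).derivative.eval (Real.log y) * y⁻¹ *
            Real.exp (-(Real.log y) ^ 2 / (4 * t) - ((n : ℝ) + 1) * Real.log y) +
          (LKq t n).eval (Real.log y) *
            (Real.exp (-(Real.log y) ^ 2 / (4 * t) - ((n : ℝ) + 1) * Real.log y) *
              (-(2 * Real.log y * y⁻¹) / (4 * t) - ((n : ℝ) + 1) * y⁻¹))) y :=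
      hq.mul hφ.exp
    have heq : (fun z => (LKq t n).eval (Real.log z) *
        Real.exp (-(Real.log z) ^ 2 / (4 * t) - ((n : ℝ) + 1) * Real.log z)) =ᶠ[nhds y]
        LKF t n := by
      filter_upwards [IsOpen.mem_nhds isOpen_Ioi hy] with z hz
      rw [LKF_pos n hz]
    have hval : (LKq t n).derivative.eval (Real.log y) * y⁻¹ *
          Real.exp (-(Real.log y) ^ 2 / (4 * t) - ((n : ℝ) + 1) * Real.log y) +
        (LKq t n).eval (Real.log y) *
          (Real.exp (-(Real.log y) ^ 2 / (4 * t) - ((n : ℝ) + 1) * Real.log y) *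
            (-(2 * Real.log y * y⁻¹) / (4 * t) - ((n : ℝ) + 1) * y⁻¹)) =
        LKF t (n + 1) y := by
      rw [LKF_pos (n + 1) hy]
      have hyinv : y⁻¹ = Real.exp (-Real.log y) := by
        rw [Real.exp_neg, Real.exp_log hy]
      rw [show (LKq t (n + 1)) = (LKq t n).derivative -
          (Polynomial.C (1 / (2 * t)) * Polynomial.X + Polynomial.C ((n : ℝ) + 1)) * LKq t n
        from rfl]
      have hexp : Real.exp (-(Real.log y) ^ 2 / (4 * t) - (((n : ℕ) + 1 : ℕ) + 1 : ℝ) * Real.log y)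
          = Real.exp (-(Real.log y) ^ 2 / (4 * t) - ((n : ℝ) + 1) * Real.log y) *
            Real.exp (-Real.log y) := by
        rw [← Real.exp_add]
        congr 1
        push_cast
        ring
      rw [hexp, hyinv]
      simp only [Polynomial.eval_sub, Polynomial.eval_mul, Polynomial.eval_add,
        Polynomial.eval_C, Polynomial.eval_X]
      have ht' : (4 : ℝ) * t ≠ 0 := by positivity
      have ht'' : (2 : ℝ) * t ≠ 0 := by positivity
      field_simp
      ring
    rw [← hval]
    exact hg.congr_of_eventuallyEq heq.symm
  · -- y = 0
    subst hy
    have h0 : LKF t n 0 = 0 := LKF_nonpos n (lt_irrefl 0)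
    have hval : LKF t (n + 1) 0 = 0 := LKF_nonpos (n + 1) (lt_irrefl 0)
    rw [hasDerivAt_iff_tendsto_slope, hval]
    rw [← nhdsLT_sup_nhdsGT (0 : ℝ), tendsto_sup]
    constructor
    · -- from the left: slope is eventually 0
      have hev : slope (LKF t n) 0 =ᶠ[nhdsWithin 0 (Set.Iio 0)] fun _ => (0 : ℝ) := by
        filter_upwards [self_mem_nhdsWithin] with z hz
        rw [slope_def_field, LKF_nonpos n (not_lt.2 (le_of_lt hz)), h0]
        simp
      exact Tendsto.congr' hev.symm tendsto_const_nhds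
    · -- from the right: squeeze
      obtain ⟨C, hC, hbound⟩ := LK_gauss_bound ht (LKq t n) (-((n : ℝ) + 2))
      apply squeeze_zero_norm' (a := fun y => C * Real.exp (-(Real.log y) ^ 2 / (8 * t)))
      · filter_upwards [self_mem_nhdsWithin] with z hz
        have hz : (0 : ℝ) < z := hz
        rw [slope_def_field, h0, sub_zero, sub_zero, LKF_pos n hz]
        have hzinv : z⁻¹ = Real.exp (-Real.log z) := by
          rw [Real.exp_neg, Real.exp_log hz]
        rw [div_eq_mul_inv, hzinv, Real.norm_eq_abs, mul_assoc, ← Real.exp_add, abs_mul,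
          abs_of_nonneg (Real.exp_nonneg _)]
        have : -(Real.log z) ^ 2 / (4 * t) - ((n : ℝ) + 1) * Real.log z + -Real.log z =
            -(Real.log z) ^ 2 / (4 * t) + (-((n : ℝ) + 2)) * Real.log z := by ring
        rw [this]
        exact hbound (Real.log z)
      · have := (LK_exp_tendsto ht).const_mul C
        simpa using this
  · -- negative case
    have heq : (fun _ : ℝ => (0 : ℝ)) =ᶠ[nhds y] LKF t n := by
      filter_upwards [IsOpen.mem_nhds isOpen_Iio hy] with z hz
      rw [LKF_nonpos n (not_lt.2 (le_of_lt hz))]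
    have hval : LKF t (n + 1) y = 0 := LKF_nonpos (n + 1) (not_lt.2 (le_of_lt hy))
    rw [hval]
    exact (hasDerivAt_const y 0).congr_of_eventuallyEq heq.symm

/-- The function `f_t(y) = (2πt)^{−1/2} e^{−(log y)²/(4t)} y⁻¹` for `y > 0`,
extended by `0` for `y ≤ 0`, is a Schwartz function on `ℝ`: it is smooth, all its derivatives
vanish at `0`, and `y^α f_t^{(β)}(y)` is bounded for all `α, β`. -/
theorem langlands_kernel_density_is_schwartz (t : ℝ) (ht : 0 < t) :
    ContDiff ℝ (⊤ : ℕ∞) (fun y : ℝ =>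
      if 0 < y then (2 * π * t) ^ (-(1 : ℝ) / 2) * Real.exp (-(Real.log y) ^ 2 / (4 * t)) * y⁻¹
      else 0) ∧
    (∀ β : ℕ, iteratedDeriv β (fun y : ℝ =>
      if 0 < y then (2 * π * t) ^ (-(1 : ℝ) / 2) * Real.exp (-(Real.log y) ^ 2 / (4 * t)) * y⁻¹
      else 0) 0 = 0) ∧
    ∀ α β : ℕ, ∃ C : ℝ, ∀ y : ℝ,
      |y ^ α * iteratedDeriv β (fun y : ℝ =>
        if 0 < y then (2 * π * t) ^ (-(1 : ℝ) / 2) * Real.exp (-(Real.log y) ^ 2 / (4 * t)) * y⁻¹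
        else 0) y| ≤ C := by
  set f : ℝ → ℝ := fun y : ℝ =>
      if 0 < y then (2 * π * t) ^ (-(1 : ℝ) / 2) * Real.exp (-(Real.log y) ^ 2 / (4 * t)) * y⁻¹
      else 0 with hf
  have hf0 : f = LKF t 0 := by
    funext y
    by_cases hy : 0 < y
    · rw [hf]
      simp only [if_pos hy]
      rw [LKF_pos 0 hy]
      have hyinv : y⁻¹ = Real.exp (-Real.log y) := by
        rw [Real.exp_neg, Real.exp_log hy]
      simp only [LKq, Polynomial.eval_C]
      rw [mul_assoc, hyinv, ← Real.exp_add]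
      congr 2
      push_cast
      ring
    · rw [hf]
      simp only [if_neg hy]
      rw [LKF_nonpos 0 hy]
  have hiter : ∀ n : ℕ, iteratedDeriv n f = LKF t n := by
    intro n
    induction n with
    | zero => simpa [iteratedDeriv_zero] using hf0
    | succ n ih =>
      rw [iteratedDeriv_succ, ih]
      funext y
      exact (LKF_hasDerivAt ht n y).deriv
  refine ⟨?_, ?_, ?_⟩
  · apply contDiff_of_differentiable_iteratedDeriv
    intro m _
    rw [hiter m]
    exact fun y => (LKF_hasDerivAt ht m y).differentiableAt
  · intro β
    rw [hiter β]
    exact LKF_nonpos β (lt_irrefl 0)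
  · intro α β
    obtain ⟨C, hC, hbound⟩ := LK_gauss_bound ht (LKq t β) ((α : ℝ) - ((β : ℝ) + 1))
    refine ⟨C, fun y => ?_⟩
    rw [hiter β]
    by_cases hy : 0 < y
    · rw [LKF_pos β hy]
      have hpow : y ^ α = Real.exp ((α : ℝ) * Real.log y) := by
        rw [Real.exp_nat_mul, Real.exp_log hy]
      rw [hpow]
      have : Real.exp ((α : ℝ) * Real.log y) * ((LKq t β).eval (Real.log y) *
          Real.exp (-(Real.log y) ^ 2 / (4 * t) - ((β : ℝ) + 1) * Real.log y)) =
          (LKq t β).eval (Real.log y) *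
          Real.exp (-(Real.log y) ^ 2 / (4 * t) + ((α : ℝ) - ((β : ℝ) + 1)) * Real.log y) := by
        rw [mul_comm, mul_assoc, ← Real.exp_add]
        congr 2
        ring
      rw [this, abs_mul, abs_of_nonneg (Real.exp_nonneg _)]
      calc |(LKq t β).eval (Real.log y)| *
            Real.exp (-(Real.log y) ^ 2 / (4 * t) + ((α : ℝ) - ((β : ℝ) + 1)) * Real.log y)
          ≤ C * Real.exp (-(Real.log y) ^ 2 / (8 * t)) := hbound (Real.log y)
        _ ≤ C * 1 := by
            apply mul_le_mul_of_nonneg_left _ hC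
            rw [← Real.exp_zero]
            apply Real.exp_le_exp.2
            exact div_nonpos_of_nonpos_of_nonneg (neg_nonpos_of_nonneg (sq_nonneg _))
              (by positivity)
        _ = C := mul_one C
    · rw [LKF_nonpos β hy]
      simpa using hC
end
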